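/- For every h ∈ 𝔽₂ⁿ and every real β: Σ_{f ∈ 𝔽₂ⁿ} (−1)^{χ(f·h)} · exp(−β·‖f‖) = (1 + exp(−β))ⁿ · (tanh(β/2))^{‖h‖}. (The Fourier transform of the Gibbs weight with respect to the characters of 𝔽₂ⁿ, the key computational identity of Appendices A and B.) -/

import Mathlib

open Finset

/-- Hamming weight of a binary vector. -/
def wt {n : ℕ} (v : Fin n → ZMod 2) : ℕ :=
  (Finset.univ.filter (fun i => v i = 1)).card

lemma wt_le {n : ℕ} (v : Fin n → ZMod 2) : wt v ≤ n := by
  simpa [wt] using (Finset.card_filter_le Finset.univ (fun i => v i = 1))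

lemma sign_pair (a b : ZMod 2) :
    (-1 : ℝ) ^ (a + b).val = (-1) ^ a.val * (-1) ^ b.val := by
  rw [ZMod.val_add]
  fin_cases a <;> fin_cases b <;> norm_num [ZMod.val]

lemma signSum {n : ℕ} (s : Finset (Fin n)) (g : Fin n → ZMod 2) :
    (-1 : ℝ) ^ (∑ i ∈ s, g i).val = ∏ i ∈ s, (-1 : ℝ) ^ (g i).val := by
  classical
  induction s using Finset.induction with
  | empty => simp
  | insert x s hx ih =>
    rw [Finset.sum_insert hx, Finset.prod_insert hx, sign_pair, ih]

lemma wt_eq_sum {n : ℕ} (v : Fin n → ZMod 2) : wt v = ∑ i, (v i).val := by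
  have key : ∀ a : ZMod 2, a.val = if a = 1 then 1 else 0 := by decide
  rw [wt, Finset.card_filter]
  exact Finset.sum_congr rfl fun i _ => (key (v i)).symm

lemma zmod2_sum (g : ZMod 2 → ℝ) : ∑ x : ZMod 2, g x = g 0 + g 1 := by
  rw [show (Finset.univ : Finset (ZMod 2)) = {0, 1} by decide]
  simp

lemma tanh_eq (β : ℝ) :
    Real.tanh (β / 2) = (1 - Real.exp (-β)) / (1 + Real.exp (-β)) := by
  rw [Real.tanh_eq_sinh_div_cosh, Real.sinh_eq, Real.cosh_eq]
  have h1 : Real.exp (β / 2) * Real.exp (-(β / 2)) = 1 := by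
    rw [← Real.exp_add]; simp
  have h2 : Real.exp (-β) = Real.exp (-(β / 2)) * Real.exp (-(β / 2)) := by
    rw [← Real.exp_add]; ring_nf
  rw [div_div_div_cancel_right₀, div_eq_div_iff (by positivity) (by positivity)]
  · linear_combination 2 * Real.exp (β / 2) * h2 + 2 * Real.exp (-(β / 2)) * h1
  · norm_num

/-- **Fourier transform of the Gibbs weight** with respect to the characters of `𝔽₂ⁿ`
(the key computational identity of Appendices A and B):
`Σ_f (−1)^{χ(f·h)} e^{−β‖f‖} = (1 + e^{−β})ⁿ (tanh(β/2))^{‖h‖}`. -/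
theorem gibbs_fourier_transform {n : ℕ} (h : Fin n → ZMod 2) (β : ℝ) :
    ∑ f : Fin n → ZMod 2,
        (-1 : ℝ) ^ (∑ i, f i * h i).val * Real.exp (-β * (wt f : ℝ))
      = (1 + Real.exp (-β)) ^ n * Real.tanh (β / 2) ^ wt h := by
  classical
  set e := Real.exp (-β) with he
  have hepos : 0 < 1 + e := by positivity
  -- Step 1: factor the summand over coordinates
  have step1 : ∀ f : Fin n → ZMod 2,
      (-1 : ℝ) ^ (∑ i, f i * h i).val * Real.exp (-β * (wt f : ℝ))
        = ∏ i, ((-1 : ℝ) ^ (f i * h i).val * Real.exp (-β * ((f i).val : ℝ))) := by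
    intro f
    rw [Finset.prod_mul_distrib, ← signSum]
    congr 1
    rw [← Real.exp_sum, wt_eq_sum]
    congr 1
    push_cast
    rw [Finset.mul_sum]
  simp only [step1]
  -- Step 2: swap sum and product
  rw [← Fintype.piFinset_univ, ← Finset.prod_univ_sum
    (t := fun _ : Fin n => (Finset.univ : Finset (ZMod 2)))
    (f := fun i x => (-1 : ℝ) ^ (x * h i).val * Real.exp (-β * ((x : ZMod 2).val : ℝ)))]
  -- Step 3: compute each coordinate sum
  have step3 : ∀ i, (∑ x : ZMod 2, (-1 : ℝ) ^ (x * h i).val * Real.exp (-β * ((x : ZMod 2).val : ℝ)))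
      = if h i = 1 then 1 - e else 1 + e := by
    intro i
    rw [zmod2_sum (fun x => (-1 : ℝ) ^ (x * h i).val * Real.exp (-β * ((x : ZMod 2).val : ℝ)))]
    have v0 : (((0 : ZMod 2)).val : ℝ) = 0 := by norm_num [ZMod.val_zero]
    have v1 : (((1 : ZMod 2)).val : ℝ) = 1 := by rw [ZMod.val_one]; norm_num
    have h01 : ∀ a : ZMod 2, a = 0 ∨ a = 1 := by decide
    rcases h01 (h i) with h1 | h1
    · rw [if_neg (by simp [h1])]
      simp only [h1, mul_zero, ZMod.val_zero, pow_zero, one_mul, v0, v1]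
      norm_num [he]
    · rw [if_pos h1]
      simp only [h1, mul_one, ZMod.val_zero, ZMod.val_one, pow_zero, pow_one, one_mul, v0, v1]
      norm_num [he]
      ring
  rw [Finset.prod_congr rfl fun i _ => step3 i]
  -- Step 4: split the product according to `h i`
  rw [Finset.prod_ite, Finset.prod_const, Finset.prod_const]
  have hcard1 : (Finset.univ.filter (fun i => h i = 1)).card = wt h := rfl
  have hcard2 : (Finset.univ.filter (fun i => ¬ h i = 1)).card = n - wt h := by
    rw [Finset.filter_not, Finset.card_sdiff_of_subset (Finset.filter_subset _ _)]
    simp [wt]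
  rw [hcard1, hcard2, tanh_eq, ← he]
  -- Step 5: algebra
  rw [div_pow, eq_comm, mul_comm, div_mul_eq_mul_div,
    div_eq_iff (by positivity : ((1 + e) ^ wt h : ℝ) ≠ 0)]
  rw [mul_assoc, pow_sub_mul_pow (1 + e) (wt_le h)]
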